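/- Let t ≥ 4 be an integer and let d₁,…,d_t, e₁,…,e_t, n₁,…,n_t be integers with e_i ≥ 1, n_i ≥ 1 and d_i ≥ 2e_i for all i. Define the integer φ(d,e,n) := ∏_{i=1}^{t} C(d_i+n_i, n_i) − ∏_{i=1}^{t} C(d_i−2e_i+n_i, n_i) − ( ∏_{i=1}^{t} C(e_i+n_i, n_i) − 1 )·( Σ_{i=1}^{t} n_i + 1 ). Then φ(d,e,n) ≥ 0. -/

import Mathlib

open Finset

/-- φ(d,e,n) = ∏ᵢ C(dᵢ+nᵢ,nᵢ) − ∏ᵢ C(dᵢ−2eᵢ+nᵢ,nᵢ)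
    − (∏ᵢ C(eᵢ+nᵢ,nᵢ) − 1)(Σᵢ nᵢ + 1), as an integer. -/
def phi {t : ℕ} (d e n : Fin t → ℕ) : ℤ :=
  (∏ i, ((d i + n i).choose (n i) : ℤ))
    - (∏ i, ((d i - 2 * e i + n i).choose (n i) : ℤ))
    - ((∏ i, ((e i + n i).choose (n i) : ℤ)) - 1) * ((∑ i, (n i : ℤ)) + 1)

/-- 2^t (t+1) ≤ 3^t for t ≥ 4 -/
lemma aux1 (t : ℕ) (ht : 4 ≤ t) : 2 ^ t * (t + 1) ≤ 3 ^ t := by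
  induction t, ht using Nat.le_induction with
  | base => norm_num
  | succ m hm ih =>
    calc 2 ^ (m + 1) * (m + 1 + 1) = 2 ^ m * (2 * (m + 2)) := by ring
    _ ≤ 2 ^ m * (3 * (m + 1)) := Nat.mul_le_mul_left _ (by omega)
    _ = 3 * (2 ^ m * (m + 1)) := by ring
    _ ≤ 3 * 3 ^ m := Nat.mul_le_mul_left _ ih
    _ = 3 ^ (m + 1) := by ring

/-- 2^(m+1) ≤ 3^m for m ≥ 2 -/
lemma aux2 (m : ℕ) (hm : 2 ≤ m) : 2 ^ (m + 1) ≤ 3 ^ m := by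
  induction m, hm using Nat.le_induction with
  | base => norm_num
  | succ k hk ih =>
    calc 2 ^ (k + 1 + 1) = 2 * 2 ^ (k + 1) := by ring
    _ ≤ 2 * 3 ^ k := Nat.mul_le_mul_left _ ih
    _ ≤ 3 * 3 ^ k := Nat.mul_le_mul_right _ (by norm_num)
    _ = 3 ^ (k + 1) := by ring

/-- (n+2) C(e+n,n) ≤ 2 C(2e+n,n) for e ≥ 1 -/
lemma lemStar (e : ℕ) (he : 1 ≤ e) : ∀ m : ℕ,
    (m + 2) * (e + m).choose m ≤ 2 * (2 * e + m).choose m := by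
  intro m
  induction m with
  | zero => simp
  | succ m ih =>
    refine Nat.le_of_mul_le_mul_left ?_ (show 0 < m + 1 by omega)
    simp only [show e + (m + 1) = e + m + 1 from by omega,
      show 2 * e + (m + 1) = 2 * e + m + 1 from by omega]
    have k1 : (e + m + 1).choose (m + 1) * (m + 1) = (e + m + 1) * (e + m).choose m := by
      simpa [Nat.succ_eq_add_one] using (Nat.add_one_mul_choose_eq (e + m) m).symm
    have k2 : (2 * e + m + 1).choose (m + 1) * (m + 1)
        = (2 * e + m + 1) * (2 * e + m).choose m := by
      simpa [Nat.succ_eq_add_one] using (Nat.add_one_mul_choose_eq (2 * e + m) m).symm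
    calc (m + 1) * ((m + 1 + 2) * (e + m + 1).choose (m + 1))
        = (m + 3) * ((e + m + 1).choose (m + 1) * (m + 1)) := by ring
      _ = ((m + 3) * (e + m + 1)) * (e + m).choose m := by rw [k1]; ring
      _ ≤ ((m + 2) * (2 * e + m + 1)) * (e + m).choose m := by
          apply Nat.mul_le_mul_right
          nlinarith [he]
      _ = (2 * e + m + 1) * ((m + 2) * (e + m).choose m) := by ring
      _ ≤ (2 * e + m + 1) * (2 * (2 * e + m).choose m) := Nat.mul_le_mul_left _ ih
      _ = (m + 1) * (2 * (2 * e + m + 1).choose (m + 1)) := by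
          rw [show (m+1) * (2 * (2*e+m+1).choose (m+1)) = 2 * ((2*e+m+1).choose (m+1) * (m+1)) from by ring, k2]
          ring

/-- ∏ (nᵢ+2) ≥ 2^t (Σ nᵢ + 1) for t ≥ 4, nᵢ ≥ 1. -/
lemma lemL3 {t : ℕ} (ht : 4 ≤ t) : ∀ k (n : Fin t → ℕ), (∀ i, 1 ≤ n i) →
    (∑ i, (n i - 1)) = k → 2 ^ t * ((∑ i, n i) + 1) ≤ ∏ i, (n i + 2) := by
  intro k
  induction k with
  | zero =>
    intro n hn hs
    have h1 : ∀ i : Fin t, n i = 1 := by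
      intro i
      have := Finset.sum_eq_zero_iff.mp hs i (mem_univ i)
      have := hn i
      omega
    have hsum : (∑ i, n i) = t := by
      rw [Finset.sum_congr rfl (fun i _ => h1 i)]
      simp
    have hprod : (∏ i, (n i + 2)) = 3 ^ t := by
      rw [Finset.prod_congr rfl (fun i _ => by rw [h1 i])]
      simp
    rw [hsum, hprod]
    exact aux1 t ht
  | succ m ih =>
    intro n hn hs
    have hex : ∃ i, 2 ≤ n i := by
      by_contra h
      push_neg at h
      have hz : ∀ i ∈ (univ : Finset (Fin t)), n i - 1 = 0 := fun i _ => by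
        have := h i; omega
      rw [Finset.sum_eq_zero hz] at hs
      omega
    obtain ⟨i, hi⟩ := hex
    set n' : Fin t → ℕ := Function.update n i (n i - 1) with hn'def
    have hn'1 : ∀ j, 1 ≤ n' j := by
      intro j
      by_cases hj : j = i
      · subst hj; simp [hn'def, Function.update_self]; omega
      · simp [hn'def, Function.update_of_ne hj]; exact hn j
    have herase : ∀ (f : ℕ → ℕ), ∑ j ∈ univ.erase i, f (n' j) = ∑ j ∈ univ.erase i, f (n j) :=
      fun f => Finset.sum_congr rfl (fun j hj => by
        rw [hn'def, Function.update_of_ne (Finset.ne_of_mem_erase hj)])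
    have hperase : ∏ j ∈ univ.erase i, (n' j + 2) = ∏ j ∈ univ.erase i, (n j + 2) :=
      Finset.prod_congr rfl (fun j hj => by
        rw [hn'def, Function.update_of_ne (Finset.ne_of_mem_erase hj)])
    have hs' : (∑ j, (n' j - 1)) = m := by
      have e1 : (∑ j, (n j - 1)) = (n i - 1) + ∑ j ∈ univ.erase i, (n j - 1) :=
        (Finset.add_sum_erase _ _ (mem_univ i)).symm
      have e2 : (∑ j, (n' j - 1)) = (n' i - 1) + ∑ j ∈ univ.erase i, (n' j - 1) :=
        (Finset.add_sum_erase _ _ (mem_univ i)).symm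
      have e3 : ∑ j ∈ univ.erase i, (n' j - 1) = ∑ j ∈ univ.erase i, (n j - 1) :=
        herase (fun x => x - 1)
      have e4 : n' i = n i - 1 := by rw [hn'def]; exact Function.update_self _ _ _
      omega
    have IH := ih n' hn'1 hs'
    -- sums
    have s1 : (∑ j, n j) = n i + ∑ j ∈ univ.erase i, n j :=
      (Finset.add_sum_erase _ _ (mem_univ i)).symm
    have s2 : (∑ j, n' j) = (n i - 1) + ∑ j ∈ univ.erase i, n j := by
      have := (Finset.add_sum_erase _ (fun j => n' j) (mem_univ i)).symm
      rw [this, herase (fun x => x)]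
      congr 1
      rw [hn'def]; exact Function.update_self _ _ _
    -- products
    have p1 : (∏ j, (n j + 2)) = (n i + 2) * ∏ j ∈ univ.erase i, (n j + 2) :=
      (Finset.mul_prod_erase _ _ (mem_univ i)).symm
    have p2 : (∏ j, (n' j + 2)) = (n i - 1 + 2) * ∏ j ∈ univ.erase i, (n j + 2) := by
      have := (Finset.mul_prod_erase _ (fun j => n' j + 2) (mem_univ i)).symm
      rw [this, hperase]
      congr 2
      rw [hn'def]; exact Function.update_self _ _ _
    have hPbig : 2 ^ t ≤ ∏ j ∈ univ.erase i, (n j + 2) := by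
      have h3 : (3 : ℕ) ^ (t - 1) ≤ ∏ j ∈ univ.erase i, (n j + 2) := by
        have : ∏ j ∈ univ.erase i, (3 : ℕ) ≤ ∏ j ∈ univ.erase i, (n j + 2) :=
          Finset.prod_le_prod' (fun j _ => by have := hn j; omega)
        rwa [Finset.prod_const, Finset.card_erase_of_mem (mem_univ i), card_univ,
          Fintype.card_fin] at this
      have h4 : 2 ^ t ≤ 3 ^ (t - 1) := by
        have := aux2 (t - 1) (by omega)
        have ht1 : t - 1 + 1 = t := by omega
        rwa [ht1] at this
      omega
    have key : 2 ^ t * ((∑ j, n' j) + 1) ≤ (n i - 1 + 2) * ∏ j ∈ univ.erase i, (n j + 2) := by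
      rw [← p2]; exact IH
    have expand : (n i + 2) * ∏ j ∈ univ.erase i, (n j + 2)
        = (n i - 1 + 2) * ∏ j ∈ univ.erase i, (n j + 2) + ∏ j ∈ univ.erase i, (n j + 2) := by
      have : n i + 2 = (n i - 1 + 2) + 1 := by omega
      rw [this]; ring
    have hsum' : (∑ j, n j) = (∑ j, n' j) + 1 := by rw [s1, s2]; omega
    have heq : 2 ^ t * ((∑ j, n j) + 1) = 2 ^ t * ((∑ j, n' j) + 1) + 2 ^ t := by
      rw [hsum']; ring
    rw [p1, expand, heq]
    exact Nat.add_le_add key hPbig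

/-- Pascal helper -/
lemma pascal (x ν : ℕ) : (x + 1 + (ν + 1)).choose (ν + 1)
    = (x + (ν + 1)).choose (ν + 1) + (x + (ν + 1)).choose ν := by
  have h : x + 1 + (ν + 1) = (x + 1 + ν) + 1 := by omega
  have h2 : x + 1 + ν = x + (ν + 1) := by omega
  rw [h, Nat.choose_succ_succ (x + 1 + ν) ν, h2]
  simp only [Nat.succ_eq_add_one]
  omega

/-- Main reduction: ∏C(2e+n,n) + ∏C(d−2e+n,n) ≤ ∏C(d+n,n) + 1 -/
lemma lemA {t : ℕ} (e n : Fin t → ℕ) (hn : ∀ i, 1 ≤ n i) :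
    ∀ k (d : Fin t → ℕ), (∀ i, 2 * e i ≤ d i) → (∑ i, (d i - 2 * e i)) = k →
      (∏ i, (2 * e i + n i).choose (n i)) + ∏ i, (d i - 2 * e i + n i).choose (n i)
        ≤ (∏ i, (d i + n i).choose (n i)) + 1 := by
  intro k
  induction k with
  | zero =>
    intro d hd hs
    have hz : ∀ i, d i = 2 * e i := by
      intro i
      have := Finset.sum_eq_zero_iff.mp hs i (mem_univ i)
      have := hd i
      omega
    have h1 : (∏ i, (d i - 2 * e i + n i).choose (n i)) = 1 :=
      Finset.prod_eq_one (fun i _ => by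
        rw [hz i]
        simp [Nat.sub_self])
    have h2 : (∏ i, (2 * e i + n i).choose (n i)) = ∏ i, (d i + n i).choose (n i) :=
      Finset.prod_congr rfl (fun i _ => by rw [hz i])
    omega
  | succ m ih =>
    intro d hd hs
    have hex : ∃ i, 2 * e i < d i := by
      by_contra h
      push_neg at h
      have hz : ∀ i ∈ (univ : Finset (Fin t)), d i - 2 * e i = 0 := fun i _ => by
        have := h i; omega
      rw [Finset.sum_eq_zero hz] at hs
      omega
    obtain ⟨i, hi⟩ := hex
    set d' : Fin t → ℕ := Function.update d i (d i - 1) with hd'def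
    have hd'i : d' i = d i - 1 := by rw [hd'def]; exact Function.update_self _ _ _
    have hd'le : ∀ j, 2 * e j ≤ d' j := by
      intro j
      by_cases hj : j = i
      · subst hj; rw [hd'i]; omega
      · rw [hd'def, Function.update_of_ne hj]; exact hd j
    have herase : ∀ (f : Fin t → ℕ → ℕ), ∀ S : Finset (Fin t), i ∉ S →
        ∏ j ∈ S, f j (d' j) = ∏ j ∈ S, f j (d j) := by
      intro f S hS
      exact Finset.prod_congr rfl (fun j hj => by
        rw [hd'def, Function.update_of_ne (ne_of_mem_of_not_mem hj hS)])
    have hs' : (∑ j, (d' j - 2 * e j)) = m := by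
      have e1 : (∑ j, (d j - 2 * e j)) = (d i - 2 * e i) + ∑ j ∈ univ.erase i, (d j - 2 * e j) :=
        (Finset.add_sum_erase _ _ (mem_univ i)).symm
      have e2 : (∑ j, (d' j - 2 * e j)) = (d' i - 2 * e i) + ∑ j ∈ univ.erase i, (d' j - 2 * e j) :=
        (Finset.add_sum_erase _ _ (mem_univ i)).symm
      have e3 : ∑ j ∈ univ.erase i, (d' j - 2 * e j) = ∑ j ∈ univ.erase i, (d j - 2 * e j) :=
        Finset.sum_congr rfl (fun j hj => by
          rw [hd'def, Function.update_of_ne (Finset.ne_of_mem_erase hj)])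
      omega
    have IH := ih d' hd'le hs'
    -- abbreviations
    set P := ∏ j ∈ univ.erase i, (d j + n j).choose (n j) with hP
    set Q := ∏ j ∈ univ.erase i, (d j - 2 * e j + n j).choose (n j) with hQ
    have hQP : Q ≤ P :=
      Finset.prod_le_prod' (fun j _ => Nat.choose_le_choose _ (by omega))
    -- split the four products
    have hA : (∏ j, (d j + n j).choose (n j)) = (d i + n i).choose (n i) * P :=
      (Finset.mul_prod_erase _ _ (mem_univ i)).symm
    have hB : (∏ j, (d j - 2 * e j + n j).choose (n j))
        = (d i - 2 * e i + n i).choose (n i) * Q :=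
      (Finset.mul_prod_erase _ _ (mem_univ i)).symm
    have hA' : (∏ j, (d' j + n j).choose (n j)) = (d i - 1 + n i).choose (n i) * P := by
      rw [← Finset.mul_prod_erase _ _ (mem_univ i),
        herase (fun j x => (x + n j).choose (n j)) _ (Finset.notMem_erase i univ), hd'i]
    have hB' : (∏ j, (d' j - 2 * e j + n j).choose (n j))
        = (d i - 1 - 2 * e i + n i).choose (n i) * Q := by
      rw [← Finset.mul_prod_erase _ _ (mem_univ i),
        herase (fun j x => (x - 2 * e j + n j).choose (n j)) _ (Finset.notMem_erase i univ), hd'i]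
    -- Pascal
    obtain ⟨x, hx⟩ : ∃ x, d i = x + 1 := ⟨d i - 1, by omega⟩
    obtain ⟨ν, hν⟩ : ∃ ν, n i = ν + 1 := ⟨n i - 1, by have := hn i; omega⟩
    obtain ⟨y, hy⟩ : ∃ y, d i - 2 * e i = y + 1 := ⟨d i - 2 * e i - 1, by omega⟩
    have pascalA : (d i + n i).choose (n i)
        = (d i - 1 + n i).choose (n i) + (d i - 1 + n i).choose (n i - 1) := by
      rw [hx, hν]
      simp only [Nat.add_sub_cancel]
      exact pascal x ν
    have pascalB : (d i - 2 * e i + n i).choose (n i)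
        = (d i - 1 - 2 * e i + n i).choose (n i) + (d i - 1 - 2 * e i + n i).choose (n i - 1) := by
      have hz : d i - 1 - 2 * e i = y := by omega
      rw [hy, hν, hz]
      simp only [Nat.add_sub_cancel]
      exact pascal y ν
    have hαβ : (d i - 1 - 2 * e i + n i).choose (n i - 1)
        ≤ (d i - 1 + n i).choose (n i - 1) :=
      Nat.choose_le_choose _ (by omega)
    have hmul : (d i - 1 - 2 * e i + n i).choose (n i - 1) * Q
        ≤ (d i - 1 + n i).choose (n i - 1) * P := Nat.mul_le_mul hαβ hQP
    rw [hA', hB'] at IH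
    rw [hA, hB, pascalA, pascalB]
    calc (∏ j, (2 * e j + n j).choose (n j))
          + ((d i - 1 - 2 * e i + n i).choose (n i)
            + (d i - 1 - 2 * e i + n i).choose (n i - 1)) * Q
        = ((∏ j, (2 * e j + n j).choose (n j)) + (d i - 1 - 2 * e i + n i).choose (n i) * Q)
            + (d i - 1 - 2 * e i + n i).choose (n i - 1) * Q := by ring
      _ ≤ ((d i - 1 + n i).choose (n i) * P + 1)
            + (d i - 1 + n i).choose (n i - 1) * P := Nat.add_le_add IH hmul
      _ = ((d i - 1 + n i).choose (n i) + (d i - 1 + n i).choose (n i - 1)) * P + 1 := by ring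

theorem stmt_19 (t : ℕ) (ht : 4 ≤ t) (d e n : Fin t → ℕ)
    (he : ∀ i, 1 ≤ e i) (hn : ∀ i, 1 ≤ n i) (hd : ∀ i, 2 * e i ≤ d i) :
    0 ≤ phi d e n := by
  have h1 := lemA e n hn (∑ i, (d i - 2 * e i)) d hd rfl
  have h2 : (∏ i, (n i + 2)) * (∏ i, (e i + n i).choose (n i))
      ≤ 2 ^ t * ∏ i, (2 * e i + n i).choose (n i) := by
    calc (∏ i, (n i + 2)) * ∏ i, (e i + n i).choose (n i)
        = ∏ i, ((n i + 2) * (e i + n i).choose (n i)) := Finset.prod_mul_distrib.symm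
      _ ≤ ∏ i, (2 * (2 * e i + n i).choose (n i)) :=
          Finset.prod_le_prod' (fun i _ => lemStar (e i) (he i) (n i))
      _ = 2 ^ t * ∏ i, (2 * e i + n i).choose (n i) := by
          rw [Finset.prod_mul_distrib, Finset.prod_const, card_univ, Fintype.card_fin]
  have h3 := lemL3 ht (∑ i, (n i - 1)) n hn rfl
  have h4 : ((∑ i, n i) + 1) * (∏ i, (e i + n i).choose (n i))
      ≤ ∏ i, (2 * e i + n i).choose (n i) := by
    have hp : 0 < 2 ^ t := Nat.pow_pos (by norm_num)
    refine Nat.le_of_mul_le_mul_left ?_ hp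
    calc 2 ^ t * (((∑ i, n i) + 1) * ∏ i, (e i + n i).choose (n i))
        = (2 ^ t * ((∑ i, n i) + 1)) * ∏ i, (e i + n i).choose (n i) := by ring
      _ ≤ (∏ i, (n i + 2)) * ∏ i, (e i + n i).choose (n i) :=
          Nat.mul_le_mul_right _ h3
      _ ≤ 2 ^ t * ∏ i, (2 * e i + n i).choose (n i) := h2
  -- now pass to ℤ
  have c1 : ((∏ i, (2 * e i + n i).choose (n i) : ℕ) : ℤ)
      + ((∏ i, (d i - 2 * e i + n i).choose (n i) : ℕ) : ℤ)
      ≤ ((∏ i, (d i + n i).choose (n i) : ℕ) : ℤ) + 1 := by exact_mod_cast h1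
  have c4 : ((((∑ i, n i) + 1 : ℕ)) : ℤ) * ((∏ i, (e i + n i).choose (n i) : ℕ) : ℤ)
      ≤ ((∏ i, (2 * e i + n i).choose (n i) : ℕ) : ℤ) := by exact_mod_cast h4
  have hS : (0 : ℤ) ≤ ∑ i, (n i : ℤ) :=
    Finset.sum_nonneg (fun i _ => by positivity)
  simp only [phi]
  push_cast at c1 c4 ⊢
  linarith [c1, c4, hS]
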